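/- Let q ≥ 2, k ≥ 1, let x ∈ Σ_q^n with n ≥ k, and let i be an integer with 0 ≤ i ≤ n − k. Then φ̂(T_{i,k}(x)) = φ̂(x), and φ̄(T_{i,k}(x)) is the string of length n obtained from φ̄(x) by inserting the block 0^k immediately after position i. Consequently, μ(φ̄(T_{i,k}(x))) = μ(φ̄(x)) and rt(T_{i,k}(x)) = rt(x); hence for every descendant x' ∈ D_k^{*(0)}(x) of x by exact k-TDs only, φ̂(x') = φ̂(x), μ(φ̄(x')) = μ(φ̄(x)) and rt(x') = rt(x). -/

import Mathlib

open List

namespace NoisyDup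

variable {q : ℕ}

/-- Tandem duplication `T_{i,k}`: duplicates the length-`k` substring starting
after position `i` (0-based index `i`), if it exists. -/
def dup (i k : ℕ) (x : List (ZMod q)) : List (ZMod q) :=
  if i + k ≤ x.length then x.take i ++ (x.drop i).take k ++ x.drop i else x

/-- Add `a` (mod `q`) to the entry at 0-based index `i`. -/
def addAt (x : List (ZMod q)) (i : ℕ) (a : ZMod q) : List (ZMod q) :=
  x.set i (x.getD i 0 + a)

/-- One exact tandem duplication of length `k`. -/
def ExactStep (k : ℕ) (x y : List (ZMod q)) : Prop :=
  ∃ i, i + k ≤ x.length ∧ y = dup i k x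

/-- One noisy duplication of length `k`: an exact duplication followed by adding
some `a ≠ 0` to one symbol of the inserted copy (positions are 1-indexed). -/
def NoisyStep (k : ℕ) (x y : List (ZMod q)) : Prop :=
  ∃ (i : ℕ) (a : ZMod q) (j : ℕ), i + k ≤ x.length ∧ a ≠ 0 ∧
    i + k + 1 ≤ j ∧ j ≤ i + 2 * k ∧ y = addAt (dup i k x) (j - 1) a

/-- Descendants by exact duplications only: `D_k^{*(0)}`. -/
def ExactDesc (k : ℕ) (x y : List (ZMod q)) : Prop :=
  Relation.ReflTransGen (ExactStep k) x y

/-- The descendant cone `D_k^{*(≤1)}`: any number of exact duplications and at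
most one noisy duplication. -/
def descCone (k : ℕ) (x : List (ZMod q)) : Set (List (ZMod q)) :=
  {y | ExactDesc k x y ∨ ∃ u v, ExactDesc k x u ∧ NoisyStep k u v ∧ ExactDesc k v y}

/-- `φ̂(x)`: the first `k` symbols. -/
def hatPhi (k : ℕ) (x : List (ZMod q)) : List (ZMod q) := x.take k

/-- `φ̄(x)_i = x_{i+k} - x_i` (1-indexed), a string of length `|x| - k`. -/
def barPhi (k : ℕ) (x : List (ZMod q)) : List (ZMod q) :=
  (List.range (x.length - k)).map fun i => x.getD (i + k) 0 - x.getD i 0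

/-- Auxiliary for `mu`: `cnt` counts the current run of zeros. -/
def muAux (k : ℕ) : ℕ → List (ZMod q) → List (ZMod q)
  | cnt, [] => List.replicate (cnt % k) 0
  | cnt, a :: t =>
      if a = 0 then muAux k (cnt + 1) t
      else List.replicate (cnt % k) 0 ++ a :: muAux k 0 t

/-- `μ(z)`: reduce the length of every maximal run of zeros modulo `k`. -/
def mu (k : ℕ) (z : List (ZMod q)) : List (ZMod q) := muAux k 0 z

/-- `x` contains a tandem repeat of length `k`. -/
def HasRepeat (k : ℕ) (x : List (ZMod q)) : Prop :=
  ∃ i, i + 2 * k ≤ x.length ∧ (x.drop i).take k = (x.drop (i + k)).take k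

/-- `x` is irreducible: it contains no tandem repeat of length `k`. -/
def IsIrreducible (k : ℕ) (x : List (ZMod q)) : Prop := ¬ HasRepeat k x

/-- The duplication root: the (unique) irreducible ancestor of `x` under exact
duplications of length `k`. -/
noncomputable def rt (k : ℕ) (x : List (ZMod q)) : List (ZMod q) :=
  haveI := Classical.propDecidable (∃ z, IsIrreducible k z ∧ ExactDesc k z x)
  if h : ∃ z, IsIrreducible k z ∧ ExactDesc k z x then h.choose else x

/-- The set of irreducible strings of length `n` over `Σ_q`. -/
def Irr (k n : ℕ) : Set (List (ZMod q)) := {x | x.length = n ∧ IsIrreducible k x}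

/-- `ins_k(u, j)`: the subsequence of entries in (1-indexed) positions congruent
to `j` modulo `k`. -/
def splitk (k j : ℕ) (u : List (ZMod q)) : List (ZMod q) :=
  (((List.range u.length).zip u).filter fun p => p.1 % k == j - 1).map Prod.snd

/-- The interleaving `inl(u) = ins_k(u,1) ⋯ ins_k(u,k)`. -/
def inl (k : ℕ) (u : List (ZMod q)) : List (ZMod q) :=
  ((List.range k).map fun j => splitk k (j + 1) u).flatten

/-- The indicator `Γ(z)` of the nonzero entries of `z`. -/
def gamma (z : List (ZMod q)) : List Bool := z.map fun a => decide (a ≠ 0)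

/-- The cumulative-sum map (mod `q`). -/
def cusum (z : List (ZMod q)) : List (ZMod q) :=
  (List.range z.length).map fun i => (z.take (i + 1)).sum

/-- Hamming weight of a binary string. -/
def wt (u : List Bool) : ℕ := u.count true

/-- The VT syndrome `Σ i·u_i` (1-indexed). -/
def vtSum (u : List Bool) : ℕ := (((List.range u.length).zip u).map fun p => if p.2 then p.1 + 1 else 0).sum

/-- The (variable-length) Varshamov–Tenengolts code. -/
def CVT (α m : ℕ) : Set (List Bool) := {z | z.length ≤ m - 1 ∧ vtSum z % m = α}

/-- `Σ_{i=1}^{|u|} i · (u_1 + ⋯ + u_i)`. -/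
def wSum (u : List Bool) : ℕ :=
  ((List.range u.length).map fun i => (i + 1) * wt (u.take (i + 1))).sum

/-- Tenengolts' binary map `ζ`. -/
def zeta (z : List (ZMod q)) : List Bool :=
  ((List.range z.length).zip z).map fun p => if p.1 = 0 then true else decide ((z.getD (p.1 - 1) 0).val ≤ p.2.val)

/-- `Σ_{i=1}^{|z|} (i-1)·ζ(z)_i`. -/
def tqSum (z : List (ZMod q)) : ℕ := (((List.range (zeta z).length).zip (zeta z)).map fun p => if p.2 then p.1 else 0).sum

/-- Tenengolts' (variable-length) `q`-ary single-indel-correcting code. -/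
def CTq (α β m : ℕ) : Set (List (ZMod q)) :=
  {z | z.length ≤ m ∧ (z.map ZMod.val).sum % q = α ∧ tqSum z % m = β}

/-- The length of `s_j = Γ(ins_k(μ,j))` for a codeword of length `n`
(the number of positions in `{1,…,n-k}` congruent to `j` mod `k`). -/
def sLen (k n j : ℕ) : ℕ := (List.range (n - k)).countP fun i => i % k == j - 1

/-- Admissibility of the parameters of the code `C_nd`. -/
def Admissible (q k n : ℕ) (a c : ℕ → ℕ) (b a1 a2 a3 a4 b1 b2 b3 b4 : ℕ) : Prop :=
  (∀ j ∈ Finset.Icc 1 k, a j ≤ 2 * (sLen k n j + 1)) ∧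
  (∀ j ∈ Finset.Icc 1 k, c j ≤ 2 * sLen k n j) ∧
  b ≤ 4 ∧ a1 ≤ q - 1 ∧ a2 ≤ q - 1 ∧ a3 ≤ q - 1 ∧ a4 ≤ q - 1 ∧
  b1 ≤ (n - k) / 2 ∧ b2 ≤ (n - k) / 2 ∧ b3 ≤ n - k - 1 ∧ b4 ≤ n - k - 1

/-- The code `C_nd` for the noisy duplication channel. -/
def Cnd (k n : ℕ) (a c : ℕ → ℕ) (b a1 a2 a3 a4 b1 b2 b3 b4 : ℕ) : Set (List (ZMod q)) :=
  {x | x.length = n ∧ IsIrreducible k x ∧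
    (∀ j ∈ Finset.Icc 1 k,
        gamma (splitk k j (mu k (barPhi k x))) ∈
          CVT (a j) (2 * (gamma (splitk k j (mu k (barPhi k x)))).length + 3)) ∧
    (∀ j ∈ Finset.Icc 1 k,
        wSum (gamma (splitk k j (mu k (barPhi k x)))) %
          (2 * (gamma (splitk k j (mu k (barPhi k x)))).length + 1) = c j) ∧
    ((Finset.Icc 1 k).sum fun j => wt (gamma (splitk k j (mu k (barPhi k x))))) % 5 = b ∧
    splitk 2 1 (inl k (mu k (barPhi k x))) ∈ CTq a1 b1 ((n - k + 1) / 2) ∧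
    splitk 2 2 (inl k (mu k (barPhi k x))) ∈ CTq a2 b2 ((n - k + 1) / 2) ∧
    cusum (inl k (mu k (barPhi k x))) ∈ CTq a3 b3 (n - k) ∧
    inl k (mu k (barPhi k x)) ∈ CTq a4 b4 (n - k)}

/-- `w` is obtained from `u` by deleting one occurrence of the symbol `b`. -/
def delSymb (u w : List (ZMod q)) (b : ZMod q) : Prop :=
  ∃ i, i < u.length ∧ u.getD i 0 = b ∧ w = u.eraseIdx i

/-- `w` is obtained from `u` by inserting the symbol `b` at some position. -/
def insOne (u w : List (ZMod q)) (b : ZMod q) : Prop :=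
  ∃ i, i ≤ u.length ∧ w = u.take i ++ b :: u.drop i

/-- `w` is obtained from `u` by inserting the adjacent pair `b, c`. -/
def insPair (u w : List (ZMod q)) (b c : ZMod q) : Prop :=
  ∃ i, i ≤ u.length ∧ w = u.take i ++ b :: c :: u.drop i

/-- `w` is obtained from `u` by inserting two `0`s separated by exactly one
(unchanged) symbol of `u`. -/
def insSpread0 (u w : List (ZMod q)) : Prop :=
  ∃ i, i < u.length ∧ w = u.take i ++ 0 :: u.getD i 0 :: 0 :: u.drop (i + 1)

/-- `w` is obtained from `u` by inserting a nonzero `a` and replacing the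
symbol `c` immediately following the insertion point by `c - a`. -/
def insSub (u w : List (ZMod q)) : Prop :=
  ∃ a : ZMod q, a ≠ 0 ∧ ∃ i, i < u.length ∧
    w = u.take i ++ a :: (u.getD i 0 - a) :: u.drop (i + 1)

/-- `w` is obtained from `u` by replacing a single symbol `0` by a nonzero symbol. -/
def subOne (u w : List (ZMod q)) : Prop :=
  ∃ i, i < u.length ∧ u.getD i 0 = 0 ∧ ∃ a : ZMod q, a ≠ 0 ∧ w = u.set i a

/-- `w` is obtained from `u` by replacing two adjacent symbols `0, c` by
`a, c - a` for some nonzero `a`. -/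
def subTwo (u w : List (ZMod q)) : Prop :=
  ∃ i, i + 1 < u.length ∧ u.getD i 0 = 0 ∧ ∃ a : ZMod q, a ≠ 0 ∧
    w = u.take i ++ a :: (u.getD (i + 1) 0 - a) :: u.drop (i + 2)

/-- `w` is obtained from `u` by swapping an adjacent pair `b, 0` (with `b ≠ 0`)
into `0, b`. -/
def swapPair (u w : List (ZMod q)) : Prop :=
  ∃ i, i + 1 < u.length ∧ u.getD i 0 ≠ 0 ∧ u.getD (i + 1) 0 = 0 ∧
    w = u.take i ++ 0 :: u.getD i 0 :: u.drop (i + 2)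

/-- `w` is obtained from `u` by deleting a single symbol. -/
def delQ (u w : List (ZMod q)) : Prop := ∃ i, i < u.length ∧ w = u.eraseIdx i

/-- `w` is obtained from `u` by inserting a single symbol. -/
def insQ (u w : List (ZMod q)) : Prop :=
  ∃ (i : ℕ) (b : ZMod q), i ≤ u.length ∧ w = u.take i ++ b :: u.drop i


lemma dup_eq {i k : ℕ} {x : List (ZMod q)} (h : i + k ≤ x.length) :
    dup i k x = x.take (i + k) ++ x.drop i := by
  rw [dup, if_pos h, List.take_add, List.append_assoc]

lemma dup_length {i k : ℕ} {x : List (ZMod q)} (h : i + k ≤ x.length) :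
    (dup i k x).length = x.length + k := by
  rw [dup_eq h]; simp; omega

lemma dup_getElem? {i k : ℕ} {x : List (ZMod q)} (h : i + k ≤ x.length) (j : ℕ) :
    (dup i k x)[j]? = if j < i + k then x[j]? else x[j - k]? := by
  rw [dup_eq h]
  by_cases hj : j < i + k
  · rw [List.getElem?_append_left (by simp; omega), if_pos hj, List.getElem?_take, if_pos hj]
  · rw [List.getElem?_append_right (by simp; omega), if_neg hj, List.getElem?_drop]
    congr 1
    simp; omega

lemma hatPhi_dup {i k : ℕ} {x : List (ZMod q)} (h : i + k ≤ x.length) :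
    hatPhi k (dup i k x) = hatPhi k x := by
  apply List.ext_getElem?
  intro j
  unfold hatPhi
  rw [List.getElem?_take, List.getElem?_take]
  by_cases hj : j < k
  · rw [if_pos hj, if_pos hj, dup_getElem? h, if_pos (by omega)]
  · rw [if_neg hj, if_neg hj]

lemma barPhi_getElem? {k : ℕ} (x : List (ZMod q)) (j : ℕ) :
    (barPhi k x)[j]? = if j < x.length - k then some (x.getD (j + k) 0 - x.getD j 0) else none := by
  unfold barPhi
  by_cases hj : j < x.length - k
  · rw [if_pos hj, List.getElem?_map, List.getElem?_range hj]; rfl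
  · rw [if_neg hj, List.getElem?_eq_none (by simpa using hj)]

lemma barPhi_dup {i k : ℕ} {x : List (ZMod q)} (h : i + k ≤ x.length) :
    barPhi k (dup i k x) =
      (barPhi k x).take i ++ List.replicate k 0 ++ (barPhi k x).drop i := by
  have hbl : (barPhi k x).length = x.length - k := by simp [barPhi]
  have hgd : ∀ j, (dup i k x).getD j 0 = if j < i + k then x.getD j 0 else x.getD (j - k) 0 := by
    intro j
    rw [List.getD_eq_getElem?_getD, dup_getElem? h, List.getD_eq_getElem?_getD,
      List.getD_eq_getElem?_getD]
    split <;> rfl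
  apply List.ext_getElem?
  intro j
  rw [barPhi_getElem?, dup_length h]
  by_cases h1 : j < i
  · rw [if_pos (by omega), List.getElem?_append_left (by simp [hbl]; omega),
      List.getElem?_append_left (by simp [hbl]; omega), List.getElem?_take, if_pos h1,
      barPhi_getElem?, if_pos (by omega), hgd, hgd, if_pos (by omega), if_pos (by omega)]
  · by_cases h2 : j < i + k
    · rw [if_pos (by omega), List.getElem?_append_left (by simp [hbl]; omega),
        List.getElem?_append_right (by simp [hbl]; omega), hgd, hgd,
        if_neg (by omega), if_pos (by omega)]
      have : x.getD (j + k - k) 0 = x.getD j 0 := by congr 1; omega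
      rw [this, sub_self]
      rw [List.getElem?_replicate, if_pos (by simp [hbl]; omega)]
    · by_cases h3 : j < x.length
      · have hL : ((barPhi k x).take i ++ List.replicate k (0:ZMod q)).length = i + k := by
          simp [hbl]; omega
        rw [if_pos (by omega), List.getElem?_append_right (by rw [hL]; omega),
          List.getElem?_drop, hL, barPhi_getElem?, if_pos (by omega), hgd, hgd,
          if_neg (by omega), if_neg (by omega)]
        congr 3 <;> omega
      · rw [if_neg (by omega), List.getElem?_eq_none]
        simp [hbl]; omega

lemma muAux_add_k {k : ℕ} : ∀ (z : List (ZMod q)) (cnt : ℕ),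
    muAux k (cnt + k) z = muAux k cnt z := by
  intro z
  induction z with
  | nil => intro cnt; simp [muAux, Nat.add_mod_right]
  | cons a t ih =>
    intro cnt
    by_cases ha : a = 0
    · simp only [muAux, if_pos ha]
      have : cnt + k + 1 = cnt + 1 + k := by omega
      rw [this, ih]
    · simp only [muAux, if_neg ha, Nat.add_mod_right]

lemma muAux_replicate_append {k : ℕ} : ∀ (m : ℕ) (z : List (ZMod q)) (cnt : ℕ),
    muAux k cnt (List.replicate m 0 ++ z) = muAux k (cnt + m) z := by
  intro m
  induction m with
  | zero => intro z cnt; simp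
  | succ m ih =>
    intro z cnt
    rw [List.replicate_succ, List.cons_append]
    simp only [muAux, if_pos rfl, if_true]
    rw [ih, show cnt + 1 + m = cnt + (m + 1) by omega]

lemma muAux_insert_zeros {k : ℕ} : ∀ (u v : List (ZMod q)) (cnt : ℕ),
    muAux k cnt (u ++ List.replicate k 0 ++ v) = muAux k cnt (u ++ v) := by
  intro u
  induction u with
  | nil =>
    intro v cnt
    simp only [List.nil_append]
    rw [muAux_replicate_append]
    have : cnt + k = cnt + k := rfl
    rw [show cnt + k = cnt + k from rfl, muAux_add_k]
  | cons a t ih =>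
    intro v cnt
    by_cases ha : a = 0
    · simp only [List.cons_append, muAux, if_pos ha]
      exact ih v (cnt + 1)
    · simp only [List.cons_append, muAux, if_neg ha]
      exact congrArg _ (congrArg _ (ih v 0))

lemma mu_insert_zeros {k : ℕ} (u v : List (ZMod q)) :
    mu k (u ++ List.replicate k 0 ++ v) = mu k (u ++ v) := muAux_insert_zeros u v 0

lemma eq_of_hatPhi_barPhi {k : ℕ} (hk : 1 ≤ k) {z w : List (ZMod q)}
    (hhat : hatPhi k z = hatPhi k w) (hbar : barPhi k z = barPhi k w) : z = w := by
  have h1 : min k z.length = min k w.length := by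
    have := congrArg List.length hhat; simpa [hatPhi] using this
  have h2 : z.length - k = w.length - k := by
    have := congrArg List.length hbar; simpa [barPhi] using this
  have hlen : z.length = w.length := by omega
  have key : ∀ j, z.getD j 0 = w.getD j 0 := by
    intro j
    induction j using Nat.strong_induction_on with
    | _ j ih =>
      by_cases hj : j < z.length
      · by_cases hjk : j < k
        · have e1 : z[j]? = (z.take k)[j]? := by rw [List.getElem?_take, if_pos hjk]
          have e2 : w[j]? = (w.take k)[j]? := by rw [List.getElem?_take, if_pos hjk]
          rw [List.getD_eq_getElem?_getD, List.getD_eq_getElem?_getD, e1, e2]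
          unfold hatPhi at hhat
          rw [hhat]
        · have hm : j - k < z.length - k := by omega
          have e1 : (barPhi k z).getD (j - k) 0 = z.getD (j - k + k) 0 - z.getD (j - k) 0 := by
            rw [List.getD_eq_getElem?_getD, barPhi_getElem?, if_pos hm]; rfl
          have e2 : (barPhi k w).getD (j - k) 0 = w.getD (j - k + k) 0 - w.getD (j - k) 0 := by
            rw [List.getD_eq_getElem?_getD, barPhi_getElem?, if_pos (by omega)]; rfl
          have ej : j - k + k = j := by omega
          rw [ej] at e1 e2
          have ihj : z.getD (j - k) 0 = w.getD (j - k) 0 := ih (j - k) (by omega)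
          have : z.getD j 0 - z.getD (j - k) 0 = w.getD j 0 - w.getD (j - k) 0 := by
            rw [← e1, ← e2, hbar]
          have := sub_eq_sub_iff_sub_eq_sub.mp this
          rw [ihj, sub_self] at this
          exact sub_eq_zero.mp this
      · rw [List.getD_eq_default _ _ (by omega), List.getD_eq_default _ _ (by omega)]
  apply List.ext_getElem hlen
  intro j hj1 hj2
  rw [← List.getD_eq_getElem z 0 hj1, ← List.getD_eq_getElem w 0 hj2, key]

lemma muAux_of_not_infix {k : ℕ} (hk : 1 ≤ k) :
    ∀ (z : List (ZMod q)) (cnt : ℕ), cnt < k →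
      ¬ (List.replicate k (0 : ZMod q) <:+: List.replicate cnt 0 ++ z) →
      muAux k cnt z = List.replicate cnt 0 ++ z := by
  intro z
  induction z with
  | nil =>
    intro cnt hc _
    simp [muAux, Nat.mod_eq_of_lt hc]
  | cons a t ih =>
    intro cnt hc hni
    by_cases ha : a = 0
    · subst ha
      have hre : List.replicate cnt (0 : ZMod q) ++ 0 :: t
          = List.replicate (cnt + 1) 0 ++ t := by
        rw [List.replicate_succ']; simp
      have hc1 : cnt + 1 < k := by
        rcases Nat.lt_or_ge (cnt + 1) k with h | h
        · exact h
        · exfalso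
          apply hni
          refine ⟨[], t, ?_⟩
          have hck : cnt + 1 = k := by omega
          rw [List.nil_append, hre, hck]
      simp only [muAux, if_pos rfl, if_true]
      rw [ih (cnt + 1) hc1 (by rw [← hre]; exact hni), hre]
    · simp only [muAux, if_neg ha, Nat.mod_eq_of_lt hc]
      have hnt : ¬ (List.replicate k (0 : ZMod q) <:+: List.replicate 0 0 ++ t) := by
        intro ⟨s, u, hsu⟩
        exact hni ⟨List.replicate cnt 0 ++ a :: s, u, by
          simp only [List.replicate_zero, List.nil_append] at hsu
          simp [← hsu]⟩
      rw [ih 0 hk hnt, List.replicate_zero, List.nil_append]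

lemma barPhi_not_infix {k : ℕ} (hk : 1 ≤ k) {z : List (ZMod q)}
    (hirr : IsIrreducible k z) :
    ¬ (List.replicate k (0 : ZMod q) <:+: barPhi k z) := by
  rintro ⟨s, t, hst⟩
  set i := s.length with hi
  have hbl : (barPhi k z).length = z.length - k := by simp [barPhi]
  have hlen : s.length + (k + t.length) = z.length - k := by
    have := congrArg List.length hst; simpa [hbl] using this
  have hik2 : i + 2 * k ≤ z.length := by omega
  have hzero : ∀ m, m < k → z.getD (i + m + k) 0 = z.getD (i + m) 0 := by
    intro m hm
    have h1 : (barPhi k z)[i + m]? = some 0 := by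
      rw [← hst, List.getElem?_append_left (by simp; omega),
        List.getElem?_append_right (by omega),
        List.getElem?_replicate, if_pos (by omega)]
    rw [barPhi_getElem?, if_pos (by omega)] at h1
    have := Option.some.inj h1
    exact sub_eq_zero.mp this
  apply hirr
  refine ⟨i, hik2, ?_⟩
  apply List.ext_getElem?
  intro m
  rw [List.getElem?_take, List.getElem?_take]
  by_cases hm : m < k
  · rw [if_pos hm, if_pos hm, List.getElem?_drop, List.getElem?_drop]
    have ha : i + m < z.length := by omega
    have hb : i + k + m < z.length := by omega
    rw [List.getElem?_eq_getElem ha, List.getElem?_eq_getElem hb]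
    have := hzero m hm
    rw [List.getD_eq_getElem _ 0 (show i + m + k < z.length by omega),
      List.getD_eq_getElem _ 0 ha] at this
    congr 1
    rw [← this]
    congr 1
    omega
  · rw [if_neg hm, if_neg hm]

lemma mu_eq_self_of_irr {k : ℕ} (hk : 1 ≤ k) {z : List (ZMod q)}
    (hirr : IsIrreducible k z) : mu k (barPhi k z) = barPhi k z := by
  have := muAux_of_not_infix hk (barPhi k z) 0 hk
    (by simpa using barPhi_not_infix hk hirr)
  simpa [mu] using this

lemma exists_irred {k : ℕ} (hk : 1 ≤ k) (x : List (ZMod q)) :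
    ∃ z, IsIrreducible k z ∧ ExactDesc k z x := by
  suffices h : ∀ n (x : List (ZMod q)), x.length ≤ n → ∃ z, IsIrreducible k z ∧ ExactDesc k z x by
    exact h x.length x le_rfl
  intro n
  induction n with
  | zero =>
    intro x hx
    refine ⟨x, ?_, Relation.ReflTransGen.refl⟩
    intro ⟨i, hik, _⟩
    omega
  | succ n ihn =>
    intro x hx
    by_cases hirr : IsIrreducible k x
    · exact ⟨x, hirr, Relation.ReflTransGen.refl⟩
    · have hrep : HasRepeat k x := not_not.mp hirr
      obtain ⟨i, h2k, heq⟩ := hrep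
      set x' : List (ZMod q) := x.take (i + k) ++ x.drop (i + 2 * k) with hx'
      have hlx' : x'.length = x.length - k := by
        simp [hx']; omega
      have hik' : i + k ≤ x'.length := by omega
      have hx'el : ∀ j : ℕ, x'[j]? = if j < i + k then x[j]? else x[j + k]? := by
        intro j
        by_cases hj : j < i + k
        · rw [hx', if_pos hj, List.getElem?_append_left (by simp; omega),
            List.getElem?_take, if_pos hj]
        · rw [hx', if_neg hj, List.getElem?_append_right (by simp; omega),
            List.getElem?_drop]
          congr 1
          simp
          omega
      have hxd : x = dup i k x' := by
        have hrepel : ∀ m, m < k → x[i + m]? = x[i + k + m]? := by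
          intro m hm
          have := congrArg (fun l => l[m]?) heq
          simpa [List.getElem?_take, List.getElem?_drop, hm] using this
        apply List.ext_getElem?
        intro j
        rw [dup_getElem? hik']
        by_cases h1 : j < i + k
        · rw [if_pos h1, hx'el, if_pos h1]
        · rw [if_neg h1, hx'el]
          by_cases h2 : j < i + 2 * k
          · rw [if_pos (by omega)]
            have := hrepel (j - (i + k)) (by omega)
            rw [show i + (j - (i+k)) = j - k by omega, show i + k + (j - (i+k)) = j by omega] at this
            exact this.symm
          · rw [if_neg (by omega), show j - k + k = j by omega]
      obtain ⟨z, hz1, hz2⟩ := ihn x' (by omega)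
      exact ⟨z, hz1, Relation.ReflTransGen.tail hz2 ⟨i, hik', hxd⟩⟩

lemma desc_inv {k : ℕ} {z x : List (ZMod q)} (h : ExactDesc k z x) :
    hatPhi k x = hatPhi k z ∧ mu k (barPhi k x) = mu k (barPhi k z) := by
  induction h with
  | refl => exact ⟨rfl, rfl⟩
  | tail hab hbc ih =>
    obtain ⟨i, hik, rfl⟩ := hbc
    constructor
    · rw [hatPhi_dup hik, ih.1]
    · rw [barPhi_dup hik, mu_insert_zeros, List.take_append_drop, ih.2]

lemma rt_eq_of_inv {k : ℕ} (hk : 1 ≤ k) {x y : List (ZMod q)}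
    (hhat : hatPhi k x = hatPhi k y) (hmu : mu k (barPhi k x) = mu k (barPhi k y)) :
    rt k x = rt k y := by
  have hx := exists_irred hk x
  have hy := exists_irred hk y
  rw [rt, rt, dif_pos hx, dif_pos hy]
  obtain ⟨hx1, hx2⟩ := hx.choose_spec
  obtain ⟨hy1, hy2⟩ := hy.choose_spec
  have ix := desc_inv hx2
  have iy := desc_inv hy2
  apply eq_of_hatPhi_barPhi hk
  · rw [← ix.1, ← iy.1, hhat]
  · rw [← mu_eq_self_of_irr hk hx1, ← mu_eq_self_of_irr hk hy1, ← ix.2, ← iy.2, hmu]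

/-- an exact `k`-TD leaves `φ̂` unchanged and inserts a block
`0^k` into `φ̄` after position `i`; hence `μ(φ̄(·))` and the duplication root
are invariant under exact duplications. -/
theorem exact_duplication_transform
    (q k n : ℕ) (hq : 2 ≤ q) (hk : 1 ≤ k) (hn : k ≤ n)
    (x : List (ZMod q)) (hx : x.length = n) (i : ℕ) (hi : i ≤ n - k) :
    hatPhi k (dup i k x) = hatPhi k x ∧
    barPhi k (dup i k x) =
      (barPhi k x).take i ++ List.replicate k 0 ++ (barPhi k x).drop i ∧
    mu k (barPhi k (dup i k x)) = mu k (barPhi k x) ∧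
    rt k (dup i k x) = rt k x ∧
    ∀ x' : List (ZMod q), ExactDesc k x x' →
      hatPhi k x' = hatPhi k x ∧ mu k (barPhi k x') = mu k (barPhi k x) ∧
      rt k x' = rt k x := by
  have hik : i + k ≤ x.length := by omega
  have p1 := hatPhi_dup hik
  have p2 := barPhi_dup hik
  have p3 : mu k (barPhi k (dup i k x)) = mu k (barPhi k x) := by
    rw [p2, mu_insert_zeros, List.take_append_drop]
  refine ⟨p1, p2, p3, rt_eq_of_inv hk p1 p3, ?_⟩
  intro x' hdesc
  have h := desc_inv hdesc
  exact ⟨h.1, h.2, rt_eq_of_inv hk h.1 h.2⟩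

end NoisyDup
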